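/- Let N ≥ 2 and K ≥ 1, and let (w, P) be a configuration with confidence e. Then the entropy impurity (conditional entropy) satisfies ∑_{k ∈ Fin K} w k · ∑_{i ∈ Fin N} (−P k i · log (P k i)) ≥ −log e, where log is the natural logarithm and 0·log 0 is interpreted as 0. (Specialization of the paper's Theorem 4 to the entropy impurity f(x) = −x log x, l(x) = −log x; this is the bound underlying the Boyd–Chiang remark.) -/
import Mathlib


open Finset

/-- The maximum of a real-valued vector over the finite index set `Fin N` (`N > 0`). -/
noncomputable def colMax {N : ℕ} (hN : 0 < N) (v : Fin N → ℝ) : ℝ :=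
  Finset.univ.sup' (Finset.univ_nonempty_iff.mpr ⟨⟨0, hN⟩⟩) v

/-- Specialization of the paper's Theorem 4 to the entropy impurity: the conditional
entropy of a configuration is at least `-log e`, where `e` is its confidence. -/
theorem entropy_impurity_lower_bound (N K : ℕ) (hN : 2 ≤ N) (hK : 1 ≤ K)
    (w : Fin K → ℝ) (hw : ∀ k, 0 ≤ w k) (hws : ∑ k, w k = 1)
    (P : Fin K → Fin N → ℝ) (hP : ∀ k i, 0 ≤ P k i) (hPs : ∀ k, ∑ i, P k i = 1)
    (e : ℝ) (he : e = ∑ k, w k * colMax (by omega) (P k)) :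
    -Real.log e ≤ ∑ k, w k * ∑ i, Real.negMulLog (P k i) := by
  have hN0 : 0 < N := by omega
  set m : Fin K → ℝ := fun k => colMax hN0 (P k) with hm
  have hle : ∀ k i, P k i ≤ m k := fun k i => Finset.le_sup' _ (Finset.mem_univ i)
  have hmpos : ∀ k, 0 < m k := by
    intro k
    obtain ⟨i, hi⟩ : ∃ i, 0 < P k i := by
      by_contra h
      push_neg at h
      have h0 : ∑ i, P k i = 0 :=
        Finset.sum_eq_zero fun i _ => le_antisymm (h i) (hP k i)
      rw [hPs k] at h0; norm_num at h0
    exact lt_of_lt_of_le hi (hle k i)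
  have step1 : ∀ k, -Real.log (m k) ≤ ∑ i, Real.negMulLog (P k i) := by
    intro k
    have hsum : ∑ i, P k i * (-Real.log (m k)) ≤ ∑ i, Real.negMulLog (P k i) := by
      apply Finset.sum_le_sum
      intro i _
      rcases eq_or_lt_of_le (hP k i) with h0 | h0
      · simp [← h0, Real.negMulLog]
      · have hlog : Real.log (P k i) ≤ Real.log (m k) := Real.log_le_log h0 (hle k i)
        have : -(P k i * Real.log (m k)) ≤ -(P k i * Real.log (P k i)) := by
          nlinarith
        simpa [Real.negMulLog, neg_mul, mul_neg] using this
    calc -Real.log (m k) = ∑ i, P k i * (-Real.log (m k)) := by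
          rw [← Finset.sum_mul, hPs k, one_mul]
      _ ≤ _ := hsum
  have hme : e = ∑ k, w k * m k := he
  have jensen : ∑ k, w k * Real.log (m k) ≤ Real.log e := by
    rw [hme]
    have := (strictConcaveOn_log_Ioi.concaveOn).le_map_sum (t := Finset.univ)
      (fun k _ => hw k) hws (fun k _ => Set.mem_Ioi.mpr (hmpos k))
    simpa using this
  calc -Real.log e ≤ -∑ k, w k * Real.log (m k) := by linarith
    _ = ∑ k, w k * -Real.log (m k) := by
        rw [← Finset.sum_neg_distrib]; simp [mul_neg]
    _ ≤ ∑ k, w k * ∑ i, Real.negMulLog (P k i) :=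
        Finset.sum_le_sum fun k _ => mul_le_mul_of_nonneg_left (step1 k) (hw k)
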